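/- Let u_n = 3^{n-1}·C_n with C_n = (1/n)·binomial(2n-2, n-1), and define u_n^{#3} = Σ_{i=1}^{n-1} u_i u_{n-i}. Then u_n^{#3} ~ (1/9)·(3·12^{n-1})/√(π n³) as n → ∞. -/

import Mathlib

open Real Filter

/-- `C n = (1/n) * binom(2n-2, n-1)`, the number of bracketings of `n` terms. -/
noncomputable def catC (n : ℕ) : ℝ := (Nat.choose (2 * n - 2) (n - 1) : ℝ) / n

open Stirling in
lemma u3_key_eq (m : ℕ) (hm : 1 ≤ m) :
    (Nat.centralBinom m : ℝ) * Real.sqrt (π * m) / 4 ^ m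
      = stirlingSeq (2 * m) / (stirlingSeq m) ^ 2 * Real.sqrt π := by
  have hm0 : (0 : ℝ) < m := by exact_mod_cast hm
  have hB : (0 : ℝ) < (m.factorial : ℝ) := by exact_mod_cast m.factorial_pos
  have hE : (0 : ℝ) < ((m : ℝ) / exp 1) ^ m := by positivity
  have hs : (0 : ℝ) < Real.sqrt m := Real.sqrt_pos.2 hm0
  have hCB : (Nat.centralBinom m : ℝ)
      = ((2*m).factorial : ℝ) / ((m.factorial : ℝ) * (m.factorial : ℝ)) := by
    unfold Nat.centralBinom
    rw [Nat.cast_choose ℝ (by omega), show 2 * m - m = m by omega]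
  have h1 : stirlingSeq (2 * m)
      = ((2*m).factorial : ℝ) / (2 * Real.sqrt m * (4 ^ m * (((m : ℝ) / exp 1) ^ m) ^ 2)) := by
    rw [stirlingSeq]
    congr 1
    push_cast
    rw [show (2 : ℝ) * (2 * m) = 2 ^ 2 * m by ring, Real.sqrt_mul (by positivity),
      Real.sqrt_sq (by norm_num : (0:ℝ) ≤ 2),
      show (2 * (m : ℝ)) / exp 1 = 2 * ((m : ℝ) / exp 1) by ring, mul_pow,
      show (2 : ℝ) ^ (2 * m) = 4 ^ m by rw [pow_mul]; norm_num,
      show (((m : ℝ) / exp 1)) ^ (2 * m) = (((m : ℝ) / exp 1) ^ m) ^ 2 by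
        rw [← pow_mul, mul_comm]]
  have h2 : (stirlingSeq m) ^ 2
      = ((m.factorial : ℝ) * (m.factorial : ℝ)) / ((2 * m) * (((m : ℝ) / exp 1) ^ m) ^ 2) := by
    rw [stirlingSeq, div_pow, mul_pow, Real.sq_sqrt (by positivity), sq]
  rw [h1, h2, hCB]
  have hsq : Real.sqrt m * Real.sqrt m = (m : ℝ) := Real.mul_self_sqrt hm0.le
  rw [Real.sqrt_mul pi_pos.le]
  field_simp
  ring_nf
  rw [Real.sq_sqrt hm0.le]

open Stirling in
lemma u3_tendstoA :
    Tendsto (fun m : ℕ => (Nat.centralBinom m : ℝ) * Real.sqrt (π * m) / 4 ^ m)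
      atTop (nhds 1) := by
  have h2m : Tendsto (fun m : ℕ => 2 * m) atTop atTop :=
    tendsto_atTop_atTop.mpr fun b => ⟨b, fun a ha => by omega⟩
  have hpi : Real.sqrt π ≠ 0 := by positivity
  have hpi2 : (Real.sqrt π) ^ 2 ≠ 0 := by positivity
  have h : Tendsto (fun m : ℕ => stirlingSeq (2 * m) / (stirlingSeq m) ^ 2 * Real.sqrt π)
      atTop (nhds (Real.sqrt π / (Real.sqrt π) ^ 2 * Real.sqrt π)) :=
    (((tendsto_stirlingSeq_sqrt_pi.comp h2m).div
      (tendsto_stirlingSeq_sqrt_pi.pow 2) hpi2).mul_const _)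
  have hval : Real.sqrt π / (Real.sqrt π) ^ 2 * Real.sqrt π = 1 := by
    rw [sq]; field_simp
  rw [hval] at h
  refine h.congr' ?_
  filter_upwards [eventually_ge_atTop 1] with m hm
  exact (u3_key_eq m hm).symm

lemma u3_catC_succ (m : ℕ) : catC (m + 1) = (catalan m : ℝ) := by
  have h := succ_mul_catalan_eq_centralBinom m
  have h' : ((m : ℝ) + 1) * (catalan m : ℝ) = (Nat.centralBinom m : ℝ) := by
    exact_mod_cast congrArg (Nat.cast : ℕ → ℝ) h
  unfold catC
  rw [show 2 * (m + 1) - 2 = 2 * m by omega, show m + 1 - 1 = m by omega]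
  have : (Nat.centralBinom m : ℝ) = ((2 * m).choose m : ℝ) := by rw [Nat.centralBinom]
  push_cast
  rw [← this, ← h']
  field_simp

lemma u3_sum_eq (k : ℕ) :
    (∑ i ∈ Finset.Icc 1 (k + 1),
        ((3 : ℝ) ^ (i - 1) * catC i) * ((3 : ℝ) ^ (k + 2 - i - 1) * catC (k + 2 - i)))
      = 3 ^ k * (catalan (k + 1) : ℝ) := by
  rw [show Finset.Icc 1 (k + 1) = Finset.Ico 1 (k + 2) by exact (Finset.Ico_add_one_right_eq_Icc (a := 1) (b := k + 1)).symm,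
    Finset.sum_Ico_eq_sum_range, show k + 2 - 1 = k + 1 by omega]
  have hcat : (catalan (k + 1) : ℝ)
      = ∑ j ∈ Finset.range (k + 1), (catalan j : ℝ) * (catalan (k - j) : ℝ) := by
    rw [catalan_succ]
    push_cast
    rw [Fin.sum_univ_eq_sum_range (fun j => (catalan j : ℝ) * (catalan (k - j) : ℝ))]
  rw [hcat, Finset.mul_sum]
  refine Finset.sum_congr rfl fun j hj => ?_
  have hjk : j ≤ k := by simpa [Nat.lt_succ_iff] using hj
  rw [show 1 + j - 1 = j by omega, show k + 2 - (1 + j) = (k - j) + 1 by omega,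
    show (k - j) + 1 - 1 = k - j by omega, show 1 + j = j + 1 by omega,
    u3_catC_succ, u3_catC_succ, show (3:ℝ) ^ k = 3 ^ j * 3 ^ (k - j) by
      rw [← pow_add]; congr 1; omega]
  ring

/-- with `u n = 3^(n-1) * C n` and
`u_n^{#3} = Σ_{i=1}^{n-1} u i * u (n-i)`, one has
`u_n^{#3} ~ (1/9) * (3 * 12^(n-1)) / √(π n³)`. -/
theorem u3_asymptotic :
    Filter.Tendsto
      (fun n : ℕ =>
        (∑ i ∈ Finset.Icc 1 (n - 1),
            ((3 : ℝ) ^ (i - 1) * catC i) * ((3 : ℝ) ^ (n - i - 1) * catC (n - i)))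
          / ((1 / 9) * (3 * (12 : ℝ) ^ (n - 1)) / Real.sqrt (Real.pi * (n : ℝ) ^ 3)))
      Filter.atTop (nhds 1) := by
  have hsub : Tendsto (fun n : ℕ => n - 1) atTop atTop := tendsto_sub_atTop_nat 1
  have hA' : Tendsto
      (fun n : ℕ => (Nat.centralBinom (n - 1) : ℝ) * Real.sqrt (π * (n - 1 : ℕ)) / 4 ^ (n - 1))
      atTop (nhds 1) := u3_tendstoA.comp hsub
  have h1 : Tendsto (fun n : ℕ => (n : ℝ) / ((n - 1 : ℕ) : ℝ)) atTop (nhds 1) := by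
    have h0 : Tendsto (fun n : ℕ => 1 + 1 / ((n - 1 : ℕ) : ℝ)) atTop (nhds (1 + 0)) :=
      tendsto_const_nhds.add (tendsto_one_div_atTop_nhds_zero_nat.comp hsub)
    rw [add_zero] at h0
    refine h0.congr' ?_
    filter_upwards [eventually_ge_atTop 2] with n hn
    have hge : (2 : ℝ) ≤ (n : ℝ) := by exact_mod_cast hn
    have hcast : ((n - 1 : ℕ) : ℝ) = (n : ℝ) - 1 := by
      push_cast [Nat.cast_sub (by omega : 1 ≤ n)]; ring
    have hne : (n : ℝ) - 1 ≠ 0 := by linarith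
    rw [hcast]
    field_simp; ring
  have hr : Tendsto (fun n : ℕ => Real.sqrt ((n : ℝ) / ((n - 1 : ℕ) : ℝ))) atTop (nhds 1) := by
    have h2 := (Real.continuous_sqrt.tendsto 1).comp h1
    rw [Real.sqrt_one] at h2
    exact h2
  have hmul := hA'.mul hr
  rw [mul_one] at hmul
  refine hmul.congr' ?_
  filter_upwards [eventually_ge_atTop 2] with n hn
  obtain ⟨k, rfl⟩ : ∃ k, n = k + 2 := ⟨n - 2, by omega⟩
  have hk1 : k + 2 - 1 = k + 1 := by omega
  rw [hk1]
  rw [u3_sum_eq k]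
  have hcat : (catalan (k + 1) : ℝ) = (Nat.centralBinom (k + 1) : ℝ) / ((k : ℝ) + 2) := by
    have h := succ_mul_catalan_eq_centralBinom (k + 1)
    have h' : ((k : ℝ) + 2) * (catalan (k + 1) : ℝ) = (Nat.centralBinom (k + 1) : ℝ) := by
      exact_mod_cast congrArg (Nat.cast : ℕ → ℝ) h
    rw [← h']
    field_simp
  rw [hcat]
  have hx : (0:ℝ) < ((k : ℝ) + 1) := by positivity
  have hy : (0:ℝ) < ((k : ℝ) + 2) := by positivity
  have hcx : ((k + 1 : ℕ) : ℝ) = (k : ℝ) + 1 := by push_cast; ring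
  have hcy : ((k + 2 : ℕ) : ℝ) = (k : ℝ) + 2 := by push_cast; ring
  rw [hcx, hcy]
  rw [show π * ((k : ℝ) + 2) ^ 3 = π * (((k : ℝ) + 2) ^ 2 * ((k : ℝ) + 2)) by ring]
  rw [Real.sqrt_mul pi_pos.le (((k : ℝ) + 2) ^ 2 * ((k : ℝ) + 2)),
    Real.sqrt_mul (show (0:ℝ) ≤ ((k : ℝ) + 2) ^ 2 by positivity) ((k : ℝ) + 2),
    Real.sqrt_sq hy.le,
    Real.sqrt_mul pi_pos.le ((k : ℝ) + 1),
    Real.sqrt_div hy.le, show (12:ℝ) ^ (k+1) = 3 ^ (k+1) * 4 ^ (k+1) by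
      rw [← mul_pow]; norm_num]
  have hsx : Real.sqrt ((k : ℝ) + 1) ≠ 0 := by positivity
  have hsy : Real.sqrt ((k : ℝ) + 2) ≠ 0 := by positivity
  have hsp : Real.sqrt π ≠ 0 := by positivity
  field_simp
  ring
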